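/- Let A be a finite commutative hypergroup: a finite set with involution x ↦ x̄, a distinguished identity e, and nonnegative real structure constants N_{xy}^z making ℝA an associative commutative algebra with unit e, such that N_{xy}^e ≠ 0 iff y = x̄. Suppose elements x₁,…,x_{n+1} satisfy e ≺ x₁⋯x_{n+1} (the coefficient of e in the product is positive), and elements y₁,…,y_m satisfy e ≺ y₁⋯y_m·x̄_{n+1}. Then e ≺ x₁⋯xₙ·y₁⋯y_m. -/
import Mathlib


/-- A finite hypergroup: a finite basis set with involution `inv`, identity `e`,
and nonnegative real structure constants `N x y z` (the coefficient of `z` in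
the product `x·y`) making ℝA an associative unital algebra, with the involution
an anti-automorphism, and with `N x y e ≠ 0` iff `y = inv x`. -/
structure Hypergroup (A : Type) [Fintype A] [DecidableEq A] where
  N : A → A → A → ℝ
  e : A
  inv : A → A
  N_nonneg : ∀ x y z, 0 ≤ N x y z
  inv_inv : ∀ x, inv (inv x) = x
  one_mul : ∀ x z, N e x z = if z = x then 1 else 0
  mul_one : ∀ x z, N x e z = if z = x then 1 else 0
  assoc : ∀ x y z w, ∑ u, N x y u * N u z w = ∑ u, N y z u * N x u w
  inv_anti : ∀ x y z, N (inv y) (inv x) (inv z) = N x y z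
  dual : ∀ x y, N x y e ≠ 0 ↔ y = inv x

namespace Hypergroup

variable {A : Type} [Fintype A] [DecidableEq A]

/-- The coefficient of a basis element `z` in the product `x₁ ⋯ xₙ` of a list
of basis elements (the empty product being the identity `e`). -/
def coeff (H : Hypergroup A) : List A → A → ℝ
  | [], z => if z = H.e then 1 else 0
  | x :: l, z => ∑ y, H.coeff l y * H.N x y z

end Hypergroup


open Finset in
lemma Hypergroup.coeff_nonneg {A : Type} [Fintype A] [DecidableEq A] (H : Hypergroup A) :
    ∀ (l : List A) (z : A), 0 ≤ H.coeff l z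
  | [], z => by simp [Hypergroup.coeff]; positivity
  | x :: l, z => by
    simp only [Hypergroup.coeff]
    exact Finset.sum_nonneg fun y _ => mul_nonneg (H.coeff_nonneg l y) (H.N_nonneg x y z)

open Finset in
lemma Hypergroup.coeff_append {A : Type} [Fintype A] [DecidableEq A] (H : Hypergroup A) :
    ∀ (l₁ l₂ : List A) (z : A),
      H.coeff (l₁ ++ l₂) z = ∑ u, ∑ v, H.coeff l₁ u * H.coeff l₂ v * H.N u v z
  | [], l₂, z => by
    simp [Hypergroup.coeff, H.one_mul, ite_mul, mul_comm]
  | x :: l₁, l₂, z => by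
    simp only [List.cons_append, Hypergroup.coeff]
    simp only [show l₁.append l₂ = l₁ ++ l₂ from rfl, H.coeff_append l₁ l₂]
    have swap : ∀ f : A → A → A → ℝ, (∑ y, ∑ u, ∑ v, f y u v) = ∑ u, ∑ v, ∑ y, f y u v := by
      intro f
      rw [Finset.sum_comm]
      exact Finset.sum_congr rfl fun u _ => Finset.sum_comm
    calc ∑ y, (∑ u, ∑ v, H.coeff l₁ u * H.coeff l₂ v * H.N u v y) * H.N x y z
        = ∑ y, ∑ u, ∑ v, H.coeff l₁ u * H.coeff l₂ v * (H.N u v y * H.N x y z) := by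
          refine Finset.sum_congr rfl fun y _ => ?_
          simp only [Finset.sum_mul]
          exact Finset.sum_congr rfl fun u _ => Finset.sum_congr rfl fun v _ => by ring
      _ = ∑ u, ∑ v, ∑ y, H.coeff l₁ u * H.coeff l₂ v * (H.N u v y * H.N x y z) := swap _
      _ = ∑ u, ∑ v, H.coeff l₁ u * H.coeff l₂ v * ∑ y, H.N u v y * H.N x y z :=
          Finset.sum_congr rfl fun u _ => Finset.sum_congr rfl fun v _ =>
            (Finset.mul_sum _ _ _).symm
      _ = ∑ u, ∑ v, H.coeff l₁ u * H.coeff l₂ v * ∑ w, H.N x u w * H.N w v z := by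
          refine Finset.sum_congr rfl fun u _ => Finset.sum_congr rfl fun v _ => ?_
          rw [H.assoc x u v z]
      _ = ∑ u, ∑ v, ∑ w, H.coeff l₂ v * H.N w v z * (H.coeff l₁ u * H.N x u w) := by
          refine Finset.sum_congr rfl fun u _ => Finset.sum_congr rfl fun v _ => ?_
          rw [Finset.mul_sum]
          exact Finset.sum_congr rfl fun w _ => by ring
      _ = ∑ w, ∑ u, ∑ v, H.coeff l₂ v * H.N w v z * (H.coeff l₁ u * H.N x u w) :=
          (swap _).trans (swap _)
      _ = ∑ w, ∑ v, ∑ u, H.coeff l₂ v * H.N w v z * (H.coeff l₁ u * H.N x u w) :=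
          Finset.sum_congr rfl fun w _ => Finset.sum_comm
      _ = ∑ u, ∑ v, (∑ y, H.coeff l₁ y * H.N x y u) * H.coeff l₂ v * H.N u v z := by
          refine Finset.sum_congr rfl fun w _ => Finset.sum_congr rfl fun v _ => ?_
          simp only [Finset.sum_mul]
          exact Finset.sum_congr rfl fun u _ => by ring

open Finset in
/-- Gluing lemma for commutative hypergroups: if e ≺ x₁⋯xₙ·x and
e ≺ y₁⋯y_m·x̄, then e ≺ x₁⋯xₙ·y₁⋯y_m. -/
theorem stmt_10 {A : Type} [Fintype A] [DecidableEq A] (H : Hypergroup A)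
    (hcomm : ∀ x y z, H.N x y z = H.N y x z)
    (xs : List A) (x : A) (ys : List A)
    (h1 : 0 < H.coeff (xs ++ [x]) H.e)
    (h2 : 0 < H.coeff (ys ++ [H.inv x]) H.e) :
    0 < H.coeff (xs ++ ys) H.e := by
  have hNe : 0 < H.N (H.inv x) x H.e := by
    have := (H.dual (H.inv x) x).mpr (H.inv_inv x).symm
    exact lt_of_le_of_ne (H.N_nonneg _ _ _) (Ne.symm this)
  have key : ∀ (l : List A) (a : A), 0 < H.coeff (l ++ [a]) H.e → 0 < H.coeff l (H.inv a) := by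
    intro l a h
    rw [H.coeff_append] at h
    obtain ⟨u, -, hu⟩ := Finset.exists_lt_of_sum_lt (f := fun _ => (0:ℝ)) (by simpa using h)
    obtain ⟨v, -, hv⟩ := Finset.exists_lt_of_sum_lt (f := fun _ => (0:ℝ)) (by simpa using hu)
    have hv' : 0 < H.coeff l u * H.coeff [a] v * H.N u v H.e := hv
    have hcv : ∀ w, H.coeff [a] w = if w = a then 1 else 0 := by
      intro w; simp [Hypergroup.coeff, H.mul_one]
    have hva : v = a := by
      by_contra hne
      rw [hcv v, if_neg hne, mul_zero, zero_mul] at hv'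
      exact lt_irrefl 0 hv'
    subst hva
    rw [hcv v, if_pos rfl, mul_one] at hv'
    have hN : H.N u v H.e ≠ 0 := fun h0 => by rw [h0, mul_zero] at hv'; exact lt_irrefl 0 hv'
    have hu' : u = H.inv v := by rw [(H.dual u v).mp hN, H.inv_inv]
    have hc : H.coeff l u ≠ 0 := fun h0 => by rw [h0, zero_mul] at hv'; exact lt_irrefl 0 hv'
    rw [← hu']
    exact lt_of_le_of_ne (H.coeff_nonneg l u) (Ne.symm hc)
  have hx1 : 0 < H.coeff xs (H.inv x) := key xs x h1
  have hy1 : 0 < H.coeff ys x := by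
    have := key ys (H.inv x) h2
    rwa [H.inv_inv] at this
  rw [H.coeff_append]
  have hterm : 0 < H.coeff xs (H.inv x) * H.coeff ys x * H.N (H.inv x) x H.e :=
    mul_pos (mul_pos hx1 hy1) hNe
  calc (0:ℝ) < H.coeff xs (H.inv x) * H.coeff ys x * H.N (H.inv x) x H.e := hterm
    _ ≤ ∑ v, H.coeff xs (H.inv x) * H.coeff ys v * H.N (H.inv x) v H.e := by
        refine Finset.single_le_sum (f := fun v => H.coeff xs (H.inv x) * H.coeff ys v * H.N (H.inv x) v H.e) (fun v _ => ?_) (Finset.mem_univ x)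
        exact mul_nonneg (mul_nonneg (H.coeff_nonneg _ _) (H.coeff_nonneg _ _)) (H.N_nonneg _ _ _)
    _ ≤ ∑ u, ∑ v, H.coeff xs u * H.coeff ys v * H.N u v H.e := by
        refine Finset.single_le_sum (f := fun u => ∑ v, H.coeff xs u * H.coeff ys v * H.N u v H.e) (fun u _ => ?_) (Finset.mem_univ (H.inv x))
        exact Finset.sum_nonneg fun v _ =>
          mul_nonneg (mul_nonneg (H.coeff_nonneg _ _) (H.coeff_nonneg _ _)) (H.N_nonneg _ _ _)
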